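/- arXiv:1805.00862 — 6 statements merged into one kernel-verified Lean document; each statement's English description precedes it below -/
import Mathlib

section
/- Let W be the weight matrix of a block-cycle with k blocks (k ≥ 2) on n nodes in which every node has positive out-degree, with block membership map τ, and let P be its transition matrix. Then for every l ∈ {0, 1, ..., k−1}, the vector u^l ∈ ℂ^n defined by u^l_j = exp(−2πi·l·τ(j)/k) is nonzero and satisfies P u^l = exp(−2πi·l/k) · u^l; in particular, each of the k complex numbers exp(−2πi·l/k), l = 0, ..., k−1 (the 'cycle eigenvalues', all of modulus 1), is an eigenvalue of P. -/
open Matrix Complex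

/-- **Cycle eigenvalues of a block-cycle.**
Let `W` be the weight matrix of a block-cycle with `k` blocks (`k ≥ 2`) on `n` nodes in which
every node has positive out-degree, with block membership map `τ`, and let `P` be its transition
matrix. Then for every `l ∈ {0, …, k−1}`, the vector `u` defined by
`u j = exp(−2πi·l·τ(j)/k)` is nonzero and satisfies `P u = exp(−2πi·l/k) • u`; in particular
each of the `k` cycle eigenvalues `exp(−2πi·l/k)` is an eigenvalue of `P`. -/
theorem cycle_eigenvalues_of_blockCycle
    {n k : ℕ} (hn : 0 < n) (hk : 2 ≤ k)
    (W : Matrix (Fin n) (Fin n) ℝ) (hWnonneg : ∀ i j, 0 ≤ W i j)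
    (τ : Fin n → ZMod k) (hτsurj : Function.Surjective τ)
    (hblock : ∀ i j, 0 < W i j → τ j = τ i + 1)
    (hdeg : ∀ i, 0 < ∑ j, W i j)
    (P : Matrix (Fin n) (Fin n) ℝ) (hP : ∀ i j, P i j = W i j / ∑ t, W i t)
    (l : ℕ) (hl : l < k)
    (u : Fin n → ℂ)
    (hu : ∀ j, u j = Complex.exp (-(2 * Real.pi * Complex.I * l * ((τ j).val : ℕ)) / k)) :
    u ≠ 0 ∧
    (P.map Complex.ofReal) *ᵥ u = Complex.exp (-(2 * Real.pi * Complex.I * l) / k) • u ∧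
    Module.End.HasEigenvalue (Matrix.toLin' (P.map Complex.ofReal))
      (Complex.exp (-(2 * Real.pi * Complex.I * l) / k)) := by
  have hk0 : 0 < k := by omega
  have hkC : (k : ℂ) ≠ 0 := by exact_mod_cast hk0.ne'
  set lam : ℂ := Complex.exp (-(2 * Real.pi * Complex.I * l) / k) with hlam
  -- u is nonzero
  have hune : u ≠ 0 := by
    intro h
    have := congrFun h ⟨0, hn⟩
    rw [hu] at this
    exact Complex.exp_ne_zero _ this
  -- key: if W i j > 0 then u j = lam * u i
  have key : ∀ i j : Fin n, 0 < W i j → u j = lam * u i := by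
    intro i j hij
    have hτ : τ j = τ i + 1 := hblock i j hij
    haveI : NeZero k := ⟨hk0.ne'⟩
    rw [hu, hu, hlam, ← Complex.exp_add]
    rw [Complex.exp_eq_exp_iff_exists_int]
    -- (τ j).val ≡ (τ i).val + 1 [MOD k]
    have hmod : ((τ j).val : ZMod k) = ((((τ i).val + 1 : ℕ)) : ZMod k) := by
      push_cast
      rw [ZMod.natCast_val, ZMod.natCast_val, ZMod.cast_id, ZMod.cast_id, hτ]
    have hdvd : (k : ℤ) ∣ (((τ i).val + 1 : ℕ) : ℤ) - ((τ j).val : ℤ) := by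
      have h1 : (τ j).val ≡ ((τ i).val + 1) [MOD k] :=
        (ZMod.natCast_eq_natCast_iff _ _ _).mp hmod
      exact h1.dvd
    obtain ⟨m, hm⟩ := hdvd
    refine ⟨l * m, ?_⟩
    have : (((τ i).val + 1 : ℕ) : ℂ) - ((τ j).val : ℂ) = (k : ℂ) * m := by
      exact_mod_cast congrArg (Int.cast : ℤ → ℂ) hm
    rw [← add_div, div_add' _ _ _ hkC, div_eq_div_iff hkC hkC]
    push_cast at this ⊢
    linear_combination (2 * Real.pi * Complex.I * (l:ℂ) * (k:ℂ)) * this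
  -- row sums of P are 1
  have hrow : ∀ i, ∑ j, P i j = 1 := by
    intro i
    simp only [hP]
    rw [← Finset.sum_div, div_self (hdeg i).ne']
  -- the eigenvector equation
  have heig : (P.map Complex.ofReal) *ᵥ u = lam • u := by
    funext i
    have step : ∀ j, (P i j : ℂ) * u j = (P i j : ℂ) * (lam * u i) := by
      intro j
      rcases lt_or_eq_of_le (hWnonneg i j) with h | h
      · rw [key i j h]
      · have : P i j = 0 := by rw [hP, ← h, zero_div]
        simp [this]
    calc ((P.map Complex.ofReal) *ᵥ u) i = ∑ j, (P i j : ℂ) * u j := by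
          simp [Matrix.mulVec, dotProduct, Matrix.map_apply]
      _ = ∑ j, (P i j : ℂ) * (lam * u i) := Finset.sum_congr rfl fun j _ => step j
      _ = (∑ j, (P i j : ℂ)) * (lam * u i) := by rw [Finset.sum_mul]
      _ = lam * u i := by
          have : (∑ j, (P i j : ℂ)) = 1 := by
            rw [← Complex.ofReal_sum]
            exact_mod_cast congrArg (Complex.ofReal) (hrow i)
          rw [this, one_mul]
      _ = (lam • u) i := rfl
  refine ⟨hune, heig, ?_⟩
  apply Module.End.hasEigenvalue_of_hasEigenvector (x := u)
  constructor
  · rw [Module.End.mem_eigenspace_iff, Matrix.toLin'_apply, heig]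
  · exact hune
end

section
/- Let W be the weight matrix of a block-cycle with k blocks (k ≥ 2) on n nodes in which every node has positive out-degree, with block membership map τ, and let P be its transition matrix. Suppose y⁰ ∈ ℝ^n is a left eigenvector of P for eigenvalue 1, i.e. (y⁰)ᵀ P = (y⁰)ᵀ. Then for every l ∈ {0, 1, ..., k−1}, the vector z^l ∈ ℂ^n defined by z^l_j = y⁰_j · exp(2πi·l·τ(j)/k) satisfies (z^l)ᵀ P = exp(−2πi·l/k) · (z^l)ᵀ; that is, z^l is a left eigenvector of P associated to the cycle eigenvalue exp(−2πi·l/k). -/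
open Matrix Complex

/-- **Left eigenvectors of a block-cycle associated to the cycle eigenvalues.**
Let `W` be the weight matrix of a block-cycle with `k` blocks (`k ≥ 2`) on `n` nodes in which
every node has positive out-degree, with block membership map `τ`, and let `P` be its transition
matrix. If `y⁰` is a left eigenvector of `P` for eigenvalue `1`, then for every
`l ∈ {0, …, k−1}`, the vector `z` defined by `z j = y⁰ j · exp(2πi·l·τ(j)/k)` is a left
eigenvector of `P` associated to the cycle eigenvalue `exp(−2πi·l/k)`. -/
theorem left_cycle_eigenvectors_of_blockCycle
    {n k : ℕ} (hn : 0 < n) (hk : 2 ≤ k)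
    (W : Matrix (Fin n) (Fin n) ℝ) (hWnonneg : ∀ i j, 0 ≤ W i j)
    (τ : Fin n → ZMod k) (hτsurj : Function.Surjective τ)
    (hblock : ∀ i j, 0 < W i j → τ j = τ i + 1)
    (hdeg : ∀ i, 0 < ∑ j, W i j)
    (P : Matrix (Fin n) (Fin n) ℝ) (hP : ∀ i j, P i j = W i j / ∑ t, W i t)
    (y0 : Fin n → ℝ) (hy0 : y0 ᵥ* P = y0)
    (l : ℕ) (hl : l < k)
    (z : Fin n → ℂ)
    (hz : ∀ j, z j = (y0 j : ℂ) *
      Complex.exp ((2 * Real.pi * Complex.I * l * ((τ j).val : ℕ)) / k)) :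
    z ᵥ* (P.map Complex.ofReal) = Complex.exp (-(2 * Real.pi * Complex.I * l) / k) • z := by
  haveI : Fact (1 < k) := ⟨by omega⟩
  set a : ℂ := 2 * Real.pi * Complex.I * l with ha
  have hexp1 : Complex.exp a = 1 := by
    have h : a = (l : ℤ) * (2 * Real.pi * Complex.I) := by push_cast [ha]; ring
    rw [h, Complex.exp_int_mul_two_pi_mul_I]
  have hk0 : (k : ℂ) ≠ 0 := by
    exact_mod_cast (Nat.cast_ne_zero (R := ℂ)).mpr (by omega)
  -- exp (a * m / k) is periodic in m with period k
  have hmod : ∀ m : ℕ, Complex.exp (a * ((m % k : ℕ) : ℂ) / k) = Complex.exp (a * m / k) := by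
    intro m
    have hm : ((m % k : ℕ) : ℂ) + (k : ℂ) * ((m / k : ℕ) : ℂ) = (m : ℂ) := by
      exact_mod_cast Nat.mod_add_div m k
    have h2 : a * (m : ℂ) / k = a * ((m % k : ℕ) : ℂ) / k + ((m / k : ℕ) : ℂ) * a := by
      rw [← hm]; field_simp
    rw [h2, Complex.exp_add, Complex.exp_nat_mul, hexp1, one_pow, mul_one]
  have key : ∀ i j : Fin n, 0 < W i j →
      Complex.exp (a * (((τ i).val : ℕ) : ℂ) / k)
        = Complex.exp (-a / k) * Complex.exp (a * (((τ j).val : ℕ) : ℂ) / k) := by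
    intro i j hW
    have hτ : τ j = τ i + 1 := hblock i j hW
    have hval : (τ j).val = ((τ i).val + 1) % k := by
      rw [hτ, ZMod.val_add, ZMod.val_one]
    rw [hval, hmod ((τ i).val + 1), ← Complex.exp_add]
    congr 1
    push_cast
    field_simp
    ring
  funext j
  have hsum : ∑ i, y0 i * P i j = y0 j := by
    have := congrFun hy0 j
    simpa [Matrix.vecMul, dotProduct] using this
  have hPW : ∀ i, P i j ≠ 0 → 0 < W i j := by
    intro i hPij
    rcases lt_or_eq_of_le (hWnonneg i j) with h | h
    · exact h
    · exact absurd (by rw [hP, ← h, zero_div]) hPij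
  have hterm : ∀ i, z i * ((P i j : ℝ) : ℂ)
      = Complex.exp (-a / k) * Complex.exp (a * (((τ j).val : ℕ) : ℂ) / k)
        * ((y0 i * P i j : ℝ) : ℂ) := by
    intro i
    by_cases hPij : P i j = 0
    · simp [hPij]
    · rw [hz i, key i j (hPW i hPij)]
      push_cast
      ring
  calc (z ᵥ* (P.map Complex.ofReal)) j
      = ∑ i, z i * ((P i j : ℝ) : ℂ) := by
        simp [Matrix.vecMul, dotProduct, Matrix.map]
    _ = ∑ i, Complex.exp (-a / k) * Complex.exp (a * (((τ j).val : ℕ) : ℂ) / k)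
          * ((y0 i * P i j : ℝ) : ℂ) := by
        exact Finset.sum_congr rfl fun i _ => hterm i
    _ = Complex.exp (-a / k) * Complex.exp (a * (((τ j).val : ℕ) : ℂ) / k)
          * ((∑ i, y0 i * P i j : ℝ) : ℂ) := by
        rw [← Finset.mul_sum]; push_cast; ring
    _ = Complex.exp (-a / k) * z j := by
        rw [hsum, hz j]; push_cast; ring
    _ = (Complex.exp (-(2 * Real.pi * Complex.I * l) / k) • z) j := by
        simp [ha, Pi.smul_apply, smul_eq_mul]
end

section
/- Let W, Ŵ ∈ ℝ^{n×n} be nonnegative with Ŵ obtained from W by appending edges (Ŵ_{ij} ≥ W_{ij} for all i, j, and Ŵ_{ij} = W_{ij} whenever W_{ij} > 0), and suppose every row sum d_i^out = ∑_j W_{ij} is positive. Let P and P̂ be the transition matrices of W and Ŵ, and let ρ = max_i (d̂_i^out − d_i^out)/d_i^out where d̂_i^out = ∑_j Ŵ_{ij}. Then for every row s: ∑_j |P̂_{sj} − P_{sj}| = 2·(1 − d_s^out/d̂_s^out) ≤ 2ρ/(ρ + 1). -/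
open Matrix

/-- **Row-wise perturbation of the transition matrix.**
Let `Ŵ` be obtained from `W` by appending edges (`Ŵ ≥ W` entrywise, agreeing with `W` on the
support of `W`), with all row sums of `W` positive. With `P`, `P̂` the transition matrices and
`ρ = max_i (d̂ᵢᵒᵘᵗ − dᵢᵒᵘᵗ)/dᵢᵒᵘᵗ`, every row `s` satisfies
`∑ⱼ |P̂ₛⱼ − Pₛⱼ| = 2(1 − dₛᵒᵘᵗ/d̂ₛᵒᵘᵗ) ≤ 2ρ/(ρ+1)`. -/
theorem row_perturbation_of_transition_matrix
    {n : ℕ} (hn : 0 < n)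
    (W What : Matrix (Fin n) (Fin n) ℝ)
    (hWnonneg : ∀ i j, 0 ≤ W i j)
    (hle : ∀ i j, W i j ≤ What i j)
    (hsupp : ∀ i j, 0 < W i j → What i j = W i j)
    (hdeg : ∀ i, 0 < ∑ j, W i j)
    (P Phat : Matrix (Fin n) (Fin n) ℝ)
    (hP : ∀ i j, P i j = W i j / ∑ t, W i t)
    (hPhat : ∀ i j, Phat i j = What i j / ∑ t, What i t)
    (ρ : ℝ)
    (hρ : IsGreatest (Set.range fun i : Fin n =>
      ((∑ j, What i j) - ∑ j, W i j) / ∑ j, W i j) ρ) :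
    ∀ s : Fin n,
      (∑ j, |Phat s j - P s j|) = 2 * (1 - (∑ j, W s j) / (∑ j, What s j)) ∧
      (∑ j, |Phat s j - P s j|) ≤ 2 * ρ / (ρ + 1) := by
  intro s
  set d : ℝ := ∑ j, W s j with hd
  set dh : ℝ := ∑ j, What s j with hdh
  have hd0 : 0 < d := hdeg s
  have hdle : d ≤ dh := Finset.sum_le_sum fun j _ => hle s j
  have hdh0 : 0 < dh := lt_of_lt_of_le hd0 hdle
  -- pointwise formula
  have key : ∀ j, |Phat s j - P s j| = (What s j - W s j) / dh + W s j * (1 / d - 1 / dh) := by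
    intro j
    rw [hP, hPhat]
    rcases eq_or_lt_of_le (hWnonneg s j) with h0 | hpos
    · have hW0 : 0 ≤ What s j := le_trans (hWnonneg s j) (hle s j)
      rw [← h0, zero_div, sub_zero, abs_of_nonneg (by positivity)]
      ring
    · rw [hsupp s j hpos]
      rw [abs_of_nonpos]
      · rw [← hd, ← hdh]
        field_simp
        ring
      · have h1 : W s j / dh ≤ W s j / d :=
          div_le_div_of_nonneg_left (le_of_lt hpos) hd0 hdle
        linarith
  have heq : (∑ j, |Phat s j - P s j|) = 2 * (1 - d / dh) := by
    simp only [key]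
    rw [Finset.sum_add_distrib, ← Finset.sum_div, ← Finset.sum_mul,
      Finset.sum_sub_distrib]
    rw [← hd, ← hdh]
    field_simp
    ring
  refine ⟨heq, ?_⟩
  -- ρ bound
  have hρs : (dh - d) / d ≤ ρ := hρ.2 ⟨s, rfl⟩
  have hρ0 : 0 ≤ ρ := le_trans (div_nonneg (by linarith) hd0.le) hρs
  have hdh_le : dh ≤ (ρ + 1) * d := by
    have := (div_le_iff₀ hd0).mp hρs
    linarith
  rw [heq]
  have h1 : 2 * (1 - d / dh) ≤ 2 * ρ / (ρ + 1) := by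
    rw [mul_sub, mul_one, sub_le_iff_le_add]
    have h2 : 2 * ρ / (ρ + 1) + 2 * (d / dh) ≥ 2 * ρ / (ρ + 1) + 2 / (ρ + 1) := by
      have : (1:ℝ) / (ρ + 1) ≤ d / dh := by
        rw [div_le_div_iff₀ (by linarith) hdh0]
        linarith
      have := mul_le_mul_of_nonneg_left this (by norm_num : (0:ℝ) ≤ 2)
      rw [mul_one_div] at this
      linarith
    have h3 : 2 * ρ / (ρ + 1) + 2 / (ρ + 1) = 2 := by
      field_simp
    linarith
  exact h1
end

section
/- Let W, Ŵ ∈ ℝ^{n×n} be nonnegative with Ŵ obtained from W by appending edges (Ŵ_{ij} ≥ W_{ij} for all i, j, and Ŵ_{ij} = W_{ij} whenever W_{ij} > 0), and suppose every row sum d_i^out = ∑_j W_{ij} is positive and every column sum d̂_j^in = ∑_i Ŵ_{ij} is positive. Let P and P̂ be the transition matrices of W and Ŵ, ρ = max_i (d̂_i^out − d_i^out)/d_i^out, and σ = max over pairs (i,j) with Ŵ_{ij} > 0 of d̂_j^in/d̂_i^out. Then for every column t: ∑_s |P̂_{st} − P_{st}| ≤ σ·(ρ + 1). -/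
open Matrix

/-- **Column-wise perturbation of the transition matrix.**
Let `Ŵ` be obtained from `W` by appending edges (`Ŵ ≥ W` entrywise, agreeing with `W` on the
support of `W`), with all row sums of `W` positive and all column sums of `Ŵ` positive. With
`P`, `P̂` the transition matrices, `ρ = max_i (d̂ᵢᵒᵘᵗ − dᵢᵒᵘᵗ)/dᵢᵒᵘᵗ` and
`σ = max over (i,j) with Ŵᵢⱼ > 0 of d̂ⱼⁱⁿ/d̂ᵢᵒᵘᵗ`, every column `t` satisfies
`∑ₛ |P̂ₛₜ − Pₛₜ| ≤ σ(ρ+1)`. -/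
theorem column_perturbation_of_transition_matrix
    {n : ℕ} (hn : 0 < n)
    (W What : Matrix (Fin n) (Fin n) ℝ)
    (hWnonneg : ∀ i j, 0 ≤ W i j)
    (hle : ∀ i j, W i j ≤ What i j)
    (hsupp : ∀ i j, 0 < W i j → What i j = W i j)
    (hdeg : ∀ i, 0 < ∑ j, W i j)
    (hcol : ∀ j, 0 < ∑ i, What i j)
    (P Phat : Matrix (Fin n) (Fin n) ℝ)
    (hP : ∀ i j, P i j = W i j / ∑ t, W i t)
    (hPhat : ∀ i j, Phat i j = What i j / ∑ t, What i t)
    (ρ : ℝ)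
    (hρ : IsGreatest (Set.range fun i : Fin n =>
      ((∑ j, What i j) - ∑ j, W i j) / ∑ j, W i j) ρ)
    (σ : ℝ)
    (hσ : IsGreatest {x : ℝ | ∃ i j, 0 < What i j ∧
      x = (∑ s, What s j) / (∑ t, What i t)} σ) :
    ∀ t : Fin n, (∑ s, |Phat s t - P s t|) ≤ σ * (ρ + 1) := by
  intro t
  have hWhnonneg : ∀ i j, (0:ℝ) ≤ What i j := fun i j => le_trans (hWnonneg i j) (hle i j)
  have hdhat : ∀ s, 0 < ∑ j, What s j := fun s =>
    lt_of_lt_of_le (hdeg s) (Finset.sum_le_sum fun j _ => hle s j)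
  have hdin : 0 < ∑ i, What i t := hcol t
  have hρ0 : 0 ≤ ρ := by
    have h1 := hρ.2 (Set.mem_range_self (⟨0, hn⟩ : Fin n))
    have h2 : (0:ℝ) ≤ ((∑ j, What (⟨0, hn⟩ : Fin n) j) - ∑ j, W (⟨0, hn⟩ : Fin n) j) /
        ∑ j, W (⟨0, hn⟩ : Fin n) j := by
      apply div_nonneg _ (le_of_lt (hdeg _))
      have := Finset.sum_le_sum (fun j (_ : j ∈ Finset.univ) => hle (⟨0, hn⟩ : Fin n) j)
      linarith
    linarith
  have hσ0 : 0 ≤ σ := by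
    obtain ⟨i, j, hij, hx⟩ := hσ.1
    rw [hx]
    exact div_nonneg (Finset.sum_nonneg fun s _ => hWhnonneg s j) (le_of_lt (hdhat i))
  have key : ∀ s, |Phat s t - P s t| ≤ (What s t / ∑ j, What s j) * (ρ + 1) := by
    intro s
    have hds := hdeg s
    have hdhs := hdhat s
    have hdle : (∑ j, W s j) ≤ ∑ j, What s j := Finset.sum_le_sum fun j _ => hle s j
    have hρs : ((∑ j, What s j) - ∑ j, W s j) / ∑ j, W s j ≤ ρ :=
      hρ.2 (Set.mem_range_self s)
    by_cases h : 0 < W s t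
    · have heq : What s t = W s t := hsupp s t h
      have hle' : Phat s t ≤ P s t := by
        rw [hP, hPhat, heq]
        exact div_le_div_of_nonneg_left (le_of_lt h) hds hdle
      rw [abs_of_nonpos (by linarith)]
      have e2 : -(Phat s t - P s t) = (W s t / ∑ j, What s j) *
          (((∑ j, What s j) - ∑ j, W s j) / ∑ j, W s j) := by
        rw [hP, hPhat, heq]
        field_simp
        ring
      rw [e2, heq]
      have hnn : (0:ℝ) ≤ W s t / ∑ j, What s j := div_nonneg (le_of_lt h) (le_of_lt hdhs)
      calc (W s t / ∑ j, What s j) * (((∑ j, What s j) - ∑ j, W s j) / ∑ j, W s j)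
          ≤ (W s t / ∑ j, What s j) * ρ := mul_le_mul_of_nonneg_left hρs hnn
        _ ≤ (W s t / ∑ j, What s j) * (ρ + 1) := by nlinarith
    · have hW0 : W s t = 0 := le_antisymm (not_lt.mp h) (hWnonneg s t)
      have hnn : (0:ℝ) ≤ What s t / ∑ j, What s j :=
        div_nonneg (hWhnonneg s t) (le_of_lt hdhs)
      rw [hP, hPhat, hW0]
      simp only [zero_div, sub_zero]
      rw [abs_of_nonneg hnn]
      nlinarith
  have key2 : ∀ s, (What s t / ∑ j, What s j) * (ρ + 1) ≤
      σ * (What s t / ∑ i, What i t) * (ρ + 1) := by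
    intro s
    apply mul_le_mul_of_nonneg_right _ (by linarith)
    by_cases h : 0 < What s t
    · have hσs : (∑ i, What i t) / (∑ j, What s j) ≤ σ := hσ.2 ⟨s, t, h, rfl⟩
      have e : σ * (What s t / ∑ i, What i t) =
          (What s t / ∑ i, What i t) * σ := by ring
      rw [e]
      have : What s t / ∑ j, What s j =
          (What s t / ∑ i, What i t) * ((∑ i, What i t) / (∑ j, What s j)) := by
        field_simp
      rw [this]
      exact mul_le_mul_of_nonneg_left hσs (div_nonneg (le_of_lt h) (le_of_lt hdin))
    · have h0 : What s t = 0 := le_antisymm (not_lt.mp h) (hWhnonneg s t)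
      rw [h0]
      simp
  calc ∑ s, |Phat s t - P s t| ≤ ∑ s, σ * (What s t / ∑ i, What i t) * (ρ + 1) :=
        Finset.sum_le_sum fun s _ => le_trans (key s) (key2 s)
    _ = σ * (ρ + 1) := by
        rw [← Finset.sum_mul, ← Finset.mul_sum, ← Finset.sum_div,
          div_self (ne_of_gt hdin), mul_one]
end

section
/- Let W, Ŵ ∈ ℝ^{n×n} be nonnegative with Ŵ obtained from W by appending edges (Ŵ_{ij} ≥ W_{ij} for all i, j, and Ŵ_{ij} = W_{ij} whenever W_{ij} > 0), and suppose every row sum d_i^out = ∑_j W_{ij} is positive and every column sum d̂_j^in = ∑_i Ŵ_{ij} is positive. Let P and P̂ be the transition matrices of W and Ŵ, ρ = max_i (d̂_i^out − d_i^out)/d_i^out, and σ = max over pairs (i,j) with Ŵ_{ij} > 0 of d̂_j^in/d̂_i^out. Then the spectral norm (operator 2-norm) of the perturbation R = P̂ − P satisfies ‖R‖₂ ≤ √(2σρ). -/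
open Matrix
open scoped Matrix.Norms.L2Operator

/-- Schur-type bound: if every row sum of `|R|` is at most `a` and every column sum is at
most `b`, then the `ℓ²` operator norm of `R` is at most `√(a*b)`. -/
lemma l2_opNorm_le_sqrt_of_row_col {n : ℕ} (R : Matrix (Fin n) (Fin n) ℝ) (a b : ℝ)
    (ha : 0 ≤ a) (hb : 0 ≤ b)
    (hrow : ∀ i, ∑ j, |R i j| ≤ a) (hcol : ∀ j, ∑ i, |R i j| ≤ b) :
    ‖R‖ ≤ Real.sqrt (a * b) := by
  rw [Matrix.l2_opNorm_def]
  refine ContinuousLinearMap.opNorm_le_bound _ (Real.sqrt_nonneg _) fun x => ?_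
  set y : Fin n → ℝ := (WithLp.equiv 2 (Fin n → ℝ)) x with hy
  have hxnorm : ‖x‖ = Real.sqrt (∑ j, y j ^ 2) := by
    rw [EuclideanSpace.norm_eq]
    congr 1
    exact Finset.sum_congr rfl fun j _ => by rw [Real.norm_eq_abs, sq_abs]; rfl
  have happ : ‖(Matrix.toEuclideanLin.trans LinearMap.toContinuousLinearMap) R x‖ =
      Real.sqrt (∑ i, ((R *ᵥ y) i) ^ 2) := by
    rw [EuclideanSpace.norm_eq]
    congr 1
    refine Finset.sum_congr rfl fun i _ => by rw [Real.norm_eq_abs, sq_abs]; rfl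
  rw [happ, hxnorm]
  have key : ∑ i, ((R *ᵥ y) i) ^ 2 ≤ (a * b) * ∑ j, y j ^ 2 := by
    have CS : ∀ i, ((R *ᵥ y) i) ^ 2 ≤ (∑ j, |R i j|) * (∑ j, |R i j| * y j ^ 2) := by
      intro i
      have h1 : |(R *ᵥ y) i| ≤ ∑ j, |R i j| * |y j| := by
        rw [Matrix.mulVec, dotProduct]
        calc |∑ j, R i j * y j| ≤ ∑ j, |R i j * y j| := Finset.abs_sum_le_sum_abs _ _
          _ = ∑ j, |R i j| * |y j| := Finset.sum_congr rfl fun j _ => abs_mul _ _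
      have h2 : ((R *ᵥ y) i) ^ 2 ≤ (∑ j, |R i j| * |y j|) ^ 2 := by
        rw [← sq_abs]
        exact pow_le_pow_left₀ (abs_nonneg _) h1 2
      refine h2.trans ?_
      have h3 : (∑ j, |R i j| * |y j|) =
          ∑ j, (Real.sqrt |R i j|) * (Real.sqrt |R i j| * |y j|) := by
        refine Finset.sum_congr rfl fun j _ => ?_
        rw [← mul_assoc, Real.mul_self_sqrt (abs_nonneg _)]
      rw [h3]
      refine (Finset.sum_mul_sq_le_sq_mul_sq _ _ _).trans_eq ?_
      congr 1
      · exact Finset.sum_congr rfl fun j _ => Real.sq_sqrt (abs_nonneg _)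
      · refine Finset.sum_congr rfl fun j _ => ?_
        rw [mul_pow, Real.sq_sqrt (abs_nonneg _), sq_abs]
    calc ∑ i, ((R *ᵥ y) i) ^ 2
        ≤ ∑ i, (∑ j, |R i j|) * (∑ j, |R i j| * y j ^ 2) :=
          Finset.sum_le_sum fun i _ => CS i
      _ ≤ ∑ i, a * (∑ j, |R i j| * y j ^ 2) := by
          refine Finset.sum_le_sum fun i _ => ?_
          refine mul_le_mul_of_nonneg_right (hrow i) ?_
          exact Finset.sum_nonneg fun j _ => mul_nonneg (abs_nonneg _) (sq_nonneg _)
      _ = a * ∑ j, (∑ i, |R i j|) * y j ^ 2 := by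
          rw [← Finset.mul_sum, Finset.sum_comm]
          congr 1
          exact Finset.sum_congr rfl fun j _ => (Finset.sum_mul _ _ _).symm
      _ ≤ a * ∑ j, b * y j ^ 2 := by
          refine mul_le_mul_of_nonneg_left (Finset.sum_le_sum fun j _ => ?_) ha
          exact mul_le_mul_of_nonneg_right (hcol j) (sq_nonneg _)
      _ = (a * b) * ∑ j, y j ^ 2 := by rw [← Finset.mul_sum]; ring
  calc Real.sqrt (∑ i, ((R *ᵥ y) i) ^ 2) ≤ Real.sqrt ((a * b) * ∑ j, y j ^ 2) :=
        Real.sqrt_le_sqrt key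
    _ = Real.sqrt (a * b) * Real.sqrt (∑ j, y j ^ 2) :=
        Real.sqrt_mul (mul_nonneg ha hb) _

/-- **Spectral norm bound on the perturbation of the transition matrix.**
Let `Ŵ` be obtained from `W` by appending edges (`Ŵ ≥ W` entrywise, agreeing with `W` on the
support of `W`), with all row sums of `W` positive and all column sums of `Ŵ` positive. With
`P`, `P̂` the transition matrices, `ρ = max_i (d̂ᵢᵒᵘᵗ − dᵢᵒᵘᵗ)/dᵢᵒᵘᵗ` and
`σ = max over (i,j) with Ŵᵢⱼ > 0 of d̂ⱼⁱⁿ/d̂ᵢᵒᵘᵗ`, the spectral norm (operator 2-norm,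
here via the scoped `Matrix.L2OpNorm` instance) of `R = P̂ − P` satisfies `‖R‖₂ ≤ √(2σρ)`. -/
theorem spectral_norm_perturbation_bound
    {n : ℕ} (hn : 0 < n)
    (W What : Matrix (Fin n) (Fin n) ℝ)
    (hWnonneg : ∀ i j, 0 ≤ W i j)
    (hle : ∀ i j, W i j ≤ What i j)
    (hsupp : ∀ i j, 0 < W i j → What i j = W i j)
    (hdeg : ∀ i, 0 < ∑ j, W i j)
    (hcol : ∀ j, 0 < ∑ i, What i j)
    (P Phat : Matrix (Fin n) (Fin n) ℝ)
    (hP : ∀ i j, P i j = W i j / ∑ t, W i t)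
    (hPhat : ∀ i j, Phat i j = What i j / ∑ t, What i t)
    (ρ : ℝ)
    (hρ : IsGreatest (Set.range fun i : Fin n =>
      ((∑ j, What i j) - ∑ j, W i j) / ∑ j, W i j) ρ)
    (σ : ℝ)
    (hσ : IsGreatest {x : ℝ | ∃ i j, 0 < What i j ∧
      x = (∑ s, What s j) / (∑ t, What i t)} σ) :
    ‖Phat - P‖ ≤ Real.sqrt (2 * σ * ρ) := by
  have hWhnonneg : ∀ i j, 0 ≤ What i j := fun i j => (hWnonneg i j).trans (hle i j)
  have hddh : ∀ i, (∑ t, W i t) ≤ ∑ t, What i t :=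
    fun i => Finset.sum_le_sum fun t _ => hle i t
  have hdhpos : ∀ i, 0 < ∑ t, What i t := fun i => (hdeg i).trans_le (hddh i)
  have hρub : ∀ i, ((∑ j, What i j) - ∑ j, W i j) / (∑ j, W i j) ≤ ρ :=
    fun i => hρ.2 ⟨i, rfl⟩
  have hρ0 : 0 ≤ ρ := by
    refine le_trans ?_ (hρub ⟨0, hn⟩)
    exact div_nonneg (by linarith [hddh ⟨0, hn⟩]) (hdeg ⟨0, hn⟩).le
  have hσub : ∀ i j, 0 < What i j → (∑ s, What s j) / (∑ t, What i t) ≤ σ :=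
    fun i j h => hσ.2 ⟨i, j, h, rfl⟩
  have hσ0 : 0 < σ := by
    obtain ⟨i, j, hw, hx⟩ := hσ.1
    rw [hx]
    exact div_pos (hcol j) (hdhpos i)
  -- row sums
  have hrow : ∀ i, ∑ j, |(Phat - P) i j| ≤ 2 * min 1 ρ := by
    intro i
    have hdp := hdeg i
    have hdhp := hdhpos i
    have habs : ∀ j, |(Phat - P) i j| = What i j / (∑ t, What i t) + W i j / (∑ t, W i t)
        - 2 * min (W i j / (∑ t, W i t)) (What i j / (∑ t, What i t)) := by
      intro j
      rw [Matrix.sub_apply, hPhat, hP]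
      rcases (hWnonneg i j).lt_or_eq with hw | hw
      · have hWe : What i j = W i j := hsupp i j hw
        rw [hWe]
        have h1 : W i j / (∑ t, What i t) ≤ W i j / (∑ t, W i t) :=
          div_le_div_of_nonneg_left hw.le hdp (hddh i)
        rw [min_eq_right h1, abs_of_nonpos (by linarith)]
        ring
      · rw [← hw]
        have h0 : (0 : ℝ) / (∑ t, W i t) = 0 := zero_div _
        rw [h0, min_eq_left (div_nonneg (hWhnonneg i j) hdhp.le), sub_zero,
          abs_of_nonneg (div_nonneg (hWhnonneg i j) hdhp.le)]
        ring
    have hsum : ∑ j, |(Phat - P) i j| =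
        2 - 2 * ∑ j, min (W i j / (∑ t, W i t)) (What i j / (∑ t, What i t)) := by
      simp_rw [habs]
      rw [Finset.sum_sub_distrib, Finset.sum_add_distrib, ← Finset.sum_div, ← Finset.sum_div,
        ← Finset.mul_sum, div_self hdhp.ne', div_self hdp.ne']
      ring
    have hminlb : (∑ t, W i t) / (∑ t, What i t) ≤
        ∑ j, min (W i j / (∑ t, W i t)) (What i j / (∑ t, What i t)) := by
      rw [Finset.sum_div]
      refine Finset.sum_le_sum fun j _ => ?_
      exact le_min (div_le_div_of_nonneg_left (hWnonneg i j) hdp (hddh i))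
        (div_le_div_of_nonneg_right (hle i j) hdhp.le)
    rw [hsum]
    have h1 : ((∑ t, What i t) - ∑ t, W i t) / (∑ t, What i t) ≤ min 1 ρ := by
      refine le_min ?_ ?_
      · rw [div_le_one hdhp]
        linarith
      · exact le_trans (div_le_div_of_nonneg_left (by linarith [hddh i]) hdp (hddh i)) (hρub i)
    have h2 : 1 - (∑ t, W i t) / (∑ t, What i t) ≤ min 1 ρ := by
      have : 1 - (∑ t, W i t) / (∑ t, What i t)
          = ((∑ t, What i t) - ∑ t, W i t) / (∑ t, What i t) := by
        field_simp
      rw [this]; exact h1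
    nlinarith [hminlb]
  -- column sums
  have hcolE : ∀ i j, |(Phat - P) i j| ≤ (max 1 ρ * σ) * (What i j / ∑ s, What s j) := by
    intro i j
    have hdp := hdeg i
    have hdhp := hdhpos i
    have hdinp := hcol j
    have hmax0 : (0 : ℝ) ≤ max 1 ρ := le_trans zero_le_one (le_max_left _ _)
    rcases (hWhnonneg i j).lt_or_eq with hwh | hwh
    · -- 0 < What i j
      have step1 : |(Phat - P) i j| ≤ max 1 ρ * (What i j / (∑ t, What i t)) := by
        rw [Matrix.sub_apply, hPhat, hP]
        rcases (hWnonneg i j).lt_or_eq with hw | hw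
        · have hWe : What i j = W i j := hsupp i j hw
          rw [hWe]
          have h1 : W i j / (∑ t, What i t) ≤ W i j / (∑ t, W i t) :=
            div_le_div_of_nonneg_left hw.le hdp (hddh i)
          rw [abs_of_nonpos (by linarith), neg_sub]
          have heq : W i j / (∑ t, W i t) - W i j / (∑ t, What i t)
              = (W i j / (∑ t, What i t)) * (((∑ t, What i t) - ∑ t, W i t) / (∑ t, W i t)) := by
            field_simp
          rw [heq]
          have hr : ((∑ t, What i t) - ∑ t, W i t) / (∑ t, W i t) ≤ max 1 ρ :=
            le_trans (hρub i) (le_max_right _ _)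
          rw [mul_comm]
          exact mul_le_mul_of_nonneg_right hr (div_nonneg hw.le hdhp.le)
        · rw [← hw, zero_div, sub_zero, abs_of_nonneg (div_nonneg (hWhnonneg i j) hdhp.le)]
          exact le_mul_of_one_le_left (div_nonneg (hWhnonneg i j) hdhp.le) (le_max_left _ _)
      have step2 : What i j / (∑ t, What i t) ≤ σ * (What i j / ∑ s, What s j) := by
        have heq : What i j / (∑ t, What i t)
            = ((∑ s, What s j) / (∑ t, What i t)) * (What i j / ∑ s, What s j) := by
          field_simp
        rw [heq]
        exact mul_le_mul_of_nonneg_right (hσub i j hwh) (div_nonneg (hWhnonneg i j) hdinp.le)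
      calc |(Phat - P) i j| ≤ max 1 ρ * (What i j / (∑ t, What i t)) := step1
        _ ≤ max 1 ρ * (σ * (What i j / ∑ s, What s j)) :=
            mul_le_mul_of_nonneg_left step2 hmax0
        _ = (max 1 ρ * σ) * (What i j / ∑ s, What s j) := by ring
    · -- What i j = 0
      have hW0 : W i j = 0 := le_antisymm (by rw [hwh]; exact hle i j) (hWnonneg i j)
      rw [Matrix.sub_apply, hPhat, hP, ← hwh, hW0]
      simp
  have hcolsum : ∀ j, ∑ i, |(Phat - P) i j| ≤ max 1 ρ * σ := by
    intro j
    calc ∑ i, |(Phat - P) i j| ≤ ∑ i, (max 1 ρ * σ) * (What i j / ∑ s, What s j) :=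
          Finset.sum_le_sum fun i _ => hcolE i j
      _ = (max 1 ρ * σ) * ((∑ i, What i j) / ∑ s, What s j) := by
          rw [← Finset.mul_sum, Finset.sum_div]
      _ = max 1 ρ * σ := by rw [div_self (hcol j).ne', mul_one]
  have ha : (0 : ℝ) ≤ 2 * min 1 ρ := by positivity
  have hb : (0 : ℝ) ≤ max 1 ρ * σ := by positivity
  have := l2_opNorm_le_sqrt_of_row_col (Phat - P) _ _ ha hb hrow hcolsum
  have harg : (2 * min 1 ρ) * (max 1 ρ * σ) = 2 * σ * ρ := by
    rcases le_total ρ 1 with h | h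
    · rw [min_eq_right h, max_eq_left h]; ring
    · rw [min_eq_left h, max_eq_right h]; ring
  rwa [harg] at this
end

section
/- Let W, Ŵ ∈ ℝ^{n×n} be nonnegative with Ŵ obtained from W by appending edges (Ŵ_{ij} ≥ W_{ij} for all i, j, and Ŵ_{ij} = W_{ij} whenever W_{ij} > 0), with all row sums of W positive and all column sums of Ŵ positive, and let P, P̂ be the transition matrices, R = P̂ − P, ρ = max_i (d̂_i^out − d_i^out)/d_i^out, and σ = max over (i,j) with Ŵ_{ij} > 0 of d̂_j^in/d̂_i^out. Suppose W is the weight matrix of a block-cycle with k blocks and block membership map τ, and let f ∈ ℝ^n be a nonnegative left eigenvector of P for eigenvalue 1 with ‖f‖₁ = 1 (the Perron vector). Fix l ∈ {0, ..., k−1} and define u^l_j = (1/√n)·exp(−2πi·l·τ(j)/k) and y^l_j = (f_j/‖f‖₂)·exp(−2πi·l·τ(j)/k). Then the first-order eigenvalue perturbation term satisfies |(y^l)^H R u^l| / |(y^l)^H u^l| ≤ √(2n)·‖f‖₂·σ^{1/2}·ρ^{1/2}. -/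
open Matrix Complex

set_option maxHeartbeats 1000000 in
/-- **First-order eigenvalue perturbation bound for cycle eigenvalues.**
With `Ŵ` obtained from the block-cycle `W` by appending edges, `P`, `P̂` the transition
matrices, `R = P̂ − P`, `ρ` and `σ` the perturbation parameters, `f` the Perron vector of `P`
(nonnegative left eigenvector for eigenvalue 1 with `‖f‖₁ = 1`), and for a fixed
`l ∈ {0, …, k−1}`, `u j = (1/√n)·exp(−2πi·l·τ(j)/k)` and
`y j = (f j/‖f‖₂)·exp(−2πi·l·τ(j)/k)`, the first-order eigenvalue perturbation term satisfies
`|yᴴ R u| / |yᴴ u| ≤ √(2n)·‖f‖₂·σ^(1/2)·ρ^(1/2)`. -/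
theorem first_order_eigenvalue_perturbation_bound
    {n k : ℕ} (hn : 0 < n) (hk : 2 ≤ k)
    (W What : Matrix (Fin n) (Fin n) ℝ)
    (hWnonneg : ∀ i j, 0 ≤ W i j)
    (hle : ∀ i j, W i j ≤ What i j)
    (hsupp : ∀ i j, 0 < W i j → What i j = W i j)
    (hdeg : ∀ i, 0 < ∑ j, W i j)
    (hcol : ∀ j, 0 < ∑ i, What i j)
    (P Phat : Matrix (Fin n) (Fin n) ℝ)
    (hP : ∀ i j, P i j = W i j / ∑ t, W i t)
    (hPhat : ∀ i j, Phat i j = What i j / ∑ t, What i t)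
    (R : Matrix (Fin n) (Fin n) ℝ) (hR : R = Phat - P)
    (ρ : ℝ)
    (hρ : IsGreatest (Set.range fun i : Fin n =>
      ((∑ j, What i j) - ∑ j, W i j) / ∑ j, W i j) ρ)
    (σ : ℝ)
    (hσ : IsGreatest {x : ℝ | ∃ i j, 0 < What i j ∧
      x = (∑ s, What s j) / (∑ t, What i t)} σ)
    (τ : Fin n → ZMod k) (hτsurj : Function.Surjective τ)
    (hblock : ∀ i j, 0 < W i j → τ j = τ i + 1)
    (f : Fin n → ℝ) (hfnonneg : ∀ j, 0 ≤ f j)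
    (hf : f ᵥ* P = f) (hf1 : ∑ j, |f j| = 1)
    (l : ℕ) (hl : l < k)
    (u y : Fin n → ℂ)
    (hu : ∀ j, u j = (1 / (Real.sqrt n : ℂ)) *
      Complex.exp (-(2 * Real.pi * Complex.I * l * ((τ j).val : ℕ)) / k))
    (hy : ∀ j, y j = ((f j / Real.sqrt (∑ i, f i ^ 2) : ℝ) : ℂ) *
      Complex.exp (-(2 * Real.pi * Complex.I * l * ((τ j).val : ℕ)) / k)) :
    ‖star y ⬝ᵥ ((R.map Complex.ofReal) *ᵥ u)‖ /
      ‖star y ⬝ᵥ u‖ ≤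
    Real.sqrt (2 * n) * Real.sqrt (∑ i, f i ^ 2) * Real.sqrt σ * Real.sqrt ρ := by
  classical
  set F : ℝ := ∑ i, f i ^ 2 with hFdef
  -- basic positivity facts
  have hd : ∀ i, 0 < ∑ t, W i t := hdeg
  have hdD : ∀ i, (∑ t, W i t) ≤ ∑ t, What i t :=
    fun i => Finset.sum_le_sum fun t _ => hle i t
  have hD : ∀ i, 0 < ∑ t, What i t := fun i => lt_of_lt_of_le (hd i) (hdD i)
  have hWhatnonneg : ∀ i j, 0 ≤ What i j := fun i j => le_trans (hWnonneg i j) (hle i j)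
  have hsumf : ∑ j, f j = 1 := by
    rw [← hf1]; exact Finset.sum_congr rfl fun j _ => (_root_.abs_of_nonneg (hfnonneg j)).symm
  have hFpos : 0 < F := by
    obtain ⟨j, hj⟩ : ∃ j, f j ≠ 0 := by
      by_contra h
      push_neg at h
      simp [h] at hsumf
    have h1 : 0 < f j ^ 2 := pow_pos ((hfnonneg j).lt_of_ne (Ne.symm hj)) 2
    exact lt_of_lt_of_le h1
      (Finset.single_le_sum (fun i _ => sq_nonneg (f i)) (Finset.mem_univ j))
  have hρ0 : 0 ≤ ρ := by
    obtain ⟨i, hi⟩ := hρ.1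
    rw [← hi]
    exact div_nonneg (sub_nonneg.mpr (hdD i)) (hd i).le
  have hρdiv : ∀ i, ((∑ t, What i t) - ∑ t, W i t) / (∑ t, W i t) ≤ ρ :=
    fun i => hρ.2 ⟨i, rfl⟩
  have hρub : ∀ i, (∑ t, What i t) - (∑ t, W i t) ≤ ρ * ∑ t, W i t := by
    intro i
    have h := hρdiv i
    rwa [div_le_iff₀ (hd i)] at h
  have hσ0 : 0 ≤ σ := by
    obtain ⟨i, j, hij, hs⟩ := hσ.1
    rw [hs]
    exact le_of_lt (div_pos (hcol j) (hD i))
  have hσub : ∀ i j, 0 < What i j → (∑ s, What s j) ≤ σ * ∑ t, What i t := by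
    intro i j hij
    have h := hσ.2 ⟨i, j, hij, rfl⟩
    rwa [div_le_iff₀ (hD i)] at h
  -- explicit formula for |R i j|
  have habsR : ∀ i j, |R i j| =
      W i j * (((∑ t, What i t) - ∑ t, W i t) / ((∑ t, W i t) * ∑ t, What i t))
      + (What i j - W i j) / ∑ t, What i t := by
    intro i j
    have hRij : R i j = What i j / (∑ t, What i t) - W i j / (∑ t, W i t) := by
      rw [hR, Matrix.sub_apply, hPhat, hP]
    rcases (hWnonneg i j).lt_or_eq with h | h
    · have hW : What i j = W i j := hsupp i j h
      rw [hRij, hW]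
      have e1 : W i j / (∑ t, What i t) - W i j / (∑ t, W i t)
          = -(W i j * (((∑ t, What i t) - ∑ t, W i t) / ((∑ t, W i t) * ∑ t, What i t))) := by
        have h1 : (∑ t, W i t) ≠ 0 := (hd i).ne'
        have h2 : (∑ t, What i t) ≠ 0 := (hD i).ne'
        field_simp
        ring
      rw [e1, abs_neg, _root_.abs_of_nonneg (by
        apply mul_nonneg h.le
        exact div_nonneg (sub_nonneg.mpr (hdD i)) (mul_nonneg (hd i).le (hD i).le))]
      simp
    · rw [hRij, ← h]
      simp only [zero_div, sub_zero, mul_zero, zero_mul, zero_add]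
      rw [_root_.abs_of_nonneg (div_nonneg (hWhatnonneg i j) (hD i).le)]
  -- row sums of |R|
  have hrow : ∀ i, ∑ j, |R i j|
      = 2 * (((∑ t, What i t) - ∑ t, W i t) / ∑ t, What i t) := by
    intro i
    rw [Finset.sum_congr rfl fun j _ => habsR i j, Finset.sum_add_distrib,
      ← Finset.sum_mul, ← Finset.sum_div, Finset.sum_sub_distrib]
    have h1 : (∑ t, W i t) ≠ 0 := (hd i).ne'
    have h2 : (∑ t, What i t) ≠ 0 := (hD i).ne'
    field_simp
    ring
  have hRsupp : ∀ i j, 0 < |R i j| → 0 < What i j := by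
    intro i j hpos
    by_contra hc
    push_neg at hc
    have h0 : What i j = 0 := le_antisymm hc (hWhatnonneg i j)
    have hW0 : W i j = 0 := le_antisymm (h0 ▸ hle i j) (hWnonneg i j)
    rw [habsR i j, hW0, h0] at hpos
    simp at hpos
  -- the key sum S and its Cauchy-Schwarz bound
  set S : ℝ := ∑ p : Fin n × Fin n, f p.1 * |R p.1 p.2| with hSdef
  have hS0 : 0 ≤ S :=
    Finset.sum_nonneg fun p _ => mul_nonneg (hfnonneg p.1) (abs_nonneg _)
  have hone : (0:ℝ) < 1 + ρ := by linarith
  have hCS : S ^ 2 ≤ 2 * σ * ρ * F * n := by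
    have key : S ^ 2 ≤
        (∑ p : Fin n × Fin n,
          f p.1 ^ 2 * (|R p.1 p.2| * ((∑ s, What s p.2) / (∑ t, What p.1 t))))
        * (∑ p : Fin n × Fin n,
          |R p.1 p.2| * ((∑ t, What p.1 t) / (∑ s, What s p.2))) := by
      apply Finset.sum_sq_le_sum_mul_sum_of_sq_eq_mul
      · intro p _
        exact mul_nonneg (sq_nonneg _) (mul_nonneg (abs_nonneg _)
          (div_nonneg (hcol p.2).le (hD p.1).le))
      · intro p _
        exact mul_nonneg (abs_nonneg _) (div_nonneg (hD p.1).le (hcol p.2).le)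
      · intro p _
        have h1 : (∑ s, What s p.2) ≠ 0 := (hcol p.2).ne'
        have h2 : (∑ t, What p.1 t) ≠ 0 := (hD p.1).ne'
        field_simp
    have hB : (∑ p : Fin n × Fin n,
          f p.1 ^ 2 * (|R p.1 p.2| * ((∑ s, What s p.2) / (∑ t, What p.1 t))))
        ≤ σ * ((2 * ρ / (1 + ρ)) * F) := by
      have step1 : (∑ p : Fin n × Fin n,
            f p.1 ^ 2 * (|R p.1 p.2| * ((∑ s, What s p.2) / (∑ t, What p.1 t))))
          ≤ ∑ p : Fin n × Fin n, σ * (f p.1 ^ 2 * |R p.1 p.2|) := by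
        apply Finset.sum_le_sum
        intro p _
        rcases (abs_nonneg (R p.1 p.2)).lt_or_eq with hx | hx
        · have hWh := hRsupp p.1 p.2 hx
          have hratio : (∑ s, What s p.2) / (∑ t, What p.1 t) ≤ σ :=
            (div_le_iff₀ (hD p.1)).mpr (hσub p.1 p.2 hWh)
          calc f p.1 ^ 2 * (|R p.1 p.2| * ((∑ s, What s p.2) / (∑ t, What p.1 t)))
              ≤ f p.1 ^ 2 * (|R p.1 p.2| * σ) := by
                apply mul_le_mul_of_nonneg_left _ (sq_nonneg _)
                exact mul_le_mul_of_nonneg_left hratio (abs_nonneg _)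
            _ = σ * (f p.1 ^ 2 * |R p.1 p.2|) := by ring
        · rw [← hx]
          simp
      have step2 : (∑ p : Fin n × Fin n, σ * (f p.1 ^ 2 * |R p.1 p.2|))
          = σ * ∑ i, f i ^ 2 * ∑ j, |R i j| := by
        rw [Fintype.sum_prod_type]
        simp only [← Finset.mul_sum]
      have step3 : σ * (∑ i, f i ^ 2 * ∑ j, |R i j|) ≤ σ * ((2 * ρ / (1 + ρ)) * F) := by
        apply mul_le_mul_of_nonneg_left _ hσ0
        have : ∀ i, f i ^ 2 * ∑ j, |R i j| ≤ f i ^ 2 * (2 * ρ / (1 + ρ)) := by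
          intro i
          apply mul_le_mul_of_nonneg_left _ (sq_nonneg _)
          have heps : ((∑ t, What i t) - ∑ t, W i t) / (∑ t, What i t) ≤ ρ / (1 + ρ) := by
            rw [div_le_div_iff₀ (hD i) hone]
            nlinarith [hρub i, hdD i, hd i, hD i]
          rw [hrow i]
          calc 2 * (((∑ t, What i t) - ∑ t, W i t) / (∑ t, What i t))
              ≤ 2 * (ρ / (1 + ρ)) := by linarith
            _ = 2 * ρ / (1 + ρ) := by ring
        calc (∑ i, f i ^ 2 * ∑ j, |R i j|) ≤ ∑ i, f i ^ 2 * (2 * ρ / (1 + ρ)) :=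
              Finset.sum_le_sum fun i _ => this i
          _ = (2 * ρ / (1 + ρ)) * F := by rw [hFdef, ← Finset.sum_mul]; ring
      calc _ ≤ ∑ p : Fin n × Fin n, σ * (f p.1 ^ 2 * |R p.1 p.2|) := step1
        _ = σ * ∑ i, f i ^ 2 * ∑ j, |R i j| := step2
        _ ≤ σ * ((2 * ρ / (1 + ρ)) * F) := step3
    have hC : (∑ p : Fin n × Fin n,
          |R p.1 p.2| * ((∑ t, What p.1 t) / (∑ s, What s p.2)))
        ≤ (1 + ρ) * n := by
      have hterm : ∀ i j, |R i j| * (∑ t, What i t) ≤ ρ * W i j + (What i j - W i j) := by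
        intro i j
        have e : (W i j * (((∑ t, What i t) - ∑ t, W i t) / ((∑ t, W i t) * ∑ t, What i t))
            + (What i j - W i j) / ∑ t, What i t) * (∑ t, What i t)
            = W i j * (((∑ t, What i t) - ∑ t, W i t) / (∑ t, W i t)) + (What i j - W i j) := by
          have h1 : (∑ t, W i t) ≠ 0 := (hd i).ne'
          have h2 : (∑ t, What i t) ≠ 0 := (hD i).ne'
          field_simp
        rw [habsR i j, e]
        have : W i j * (((∑ t, What i t) - ∑ t, W i t) / (∑ t, W i t)) ≤ W i j * ρ :=
          mul_le_mul_of_nonneg_left (hρdiv i) (hWnonneg i j)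
        linarith
      have hcolsum : ∀ j, (∑ i, |R i j| * (∑ t, What i t)) ≤ (1 + ρ) * ∑ s, What s j := by
        intro j
        calc (∑ i, |R i j| * (∑ t, What i t))
            ≤ ∑ i, (ρ * W i j + (What i j - W i j)) :=
              Finset.sum_le_sum fun i _ => hterm i j
          _ = ρ * (∑ i, W i j) + ((∑ i, What i j) - ∑ i, W i j) := by
              rw [Finset.sum_add_distrib, ← Finset.mul_sum, Finset.sum_sub_distrib]
          _ ≤ (1 + ρ) * ∑ s, What s j := by
              have h1 : (∑ i, W i j) ≤ ∑ i, What i j :=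
                Finset.sum_le_sum fun i _ => hle i j
              have h2 : 0 ≤ ∑ i, W i j :=
                Finset.sum_nonneg fun i _ => hWnonneg i j
              nlinarith
      calc (∑ p : Fin n × Fin n,
            |R p.1 p.2| * ((∑ t, What p.1 t) / (∑ s, What s p.2)))
          = ∑ j, (∑ i, |R i j| * (∑ t, What i t)) / (∑ s, What s j) := by
            rw [Fintype.sum_prod_type_right]
            refine Finset.sum_congr rfl fun j _ => ?_
            rw [Finset.sum_div]
            exact Finset.sum_congr rfl fun i _ => (mul_div_assoc _ _ _).symm
        _ ≤ ∑ j : Fin n, (1 + ρ) := by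
            apply Finset.sum_le_sum
            intro j _
            rw [div_le_iff₀ (hcol j)]
            exact hcolsum j
        _ = (1 + ρ) * n := by
            rw [Finset.sum_const, Finset.card_univ, Fintype.card_fin, nsmul_eq_mul]
            ring
      -- end hC
    calc S ^ 2 ≤ _ := key
      _ ≤ (σ * ((2 * ρ / (1 + ρ)) * F)) * ((1 + ρ) * n) := by
          apply mul_le_mul hB hC
          · exact Finset.sum_nonneg fun p _ =>
              mul_nonneg (abs_nonneg _) (div_nonneg (hD p.1).le (hcol p.2).le)
          · positivity
      _ = 2 * σ * ρ * F * n := by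
          field_simp
  have hSle : S ≤ Real.sqrt (2 * σ * ρ * F * n) := by
    rw [← Real.sqrt_sq hS0]
    exact Real.sqrt_le_sqrt hCS
  -- complex phases
  set c : ℝ := Real.sqrt F with hcdef
  have hc : 0 < c := Real.sqrt_pos.mpr hFpos
  have hsn : 0 < Real.sqrt n := Real.sqrt_pos.mpr (by exact_mod_cast hn)
  set r : Fin n → ℝ := fun j => -(2 * Real.pi * l * ((τ j).val : ℝ)) / k with hrdef
  have hexp : ∀ j : Fin n,
      (-(2 * (Real.pi : ℂ) * Complex.I * l * ((τ j).val : ℕ)) / k)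
        = ((r j : ℝ) : ℂ) * Complex.I := by
    intro j
    rw [hrdef]
    push_cast
    ring
  have hEabs : ∀ j : Fin n, ‖Complex.exp (((r j : ℝ) : ℂ) * Complex.I)‖ = 1 :=
    fun j => Complex.norm_exp_ofReal_mul_I _
  have hEconj : ∀ j : Fin n,
      (starRingEnd ℂ) (Complex.exp (((r j : ℝ) : ℂ) * Complex.I))
        * Complex.exp (((r j : ℝ) : ℂ) * Complex.I) = 1 := by
    intro j
    rw [← Complex.exp_conj, ← Complex.exp_add,
      show (starRingEnd ℂ) (((r j : ℝ) : ℂ) * Complex.I) + ((r j : ℝ) : ℂ) * Complex.I = 0 by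
        rw [_root_.map_mul, Complex.conj_ofReal, Complex.conj_I]; ring]
    exact Complex.exp_zero
  -- the denominator
  have hden : star y ⬝ᵥ u = ((1 / (c * Real.sqrt n) : ℝ) : ℂ) := by
    have hterm : ∀ j, (star y) j * u j = (((f j / (c * Real.sqrt n)) : ℝ) : ℂ) := by
      intro j
      rw [Pi.star_apply, hy j, hu j, hexp j]
      rw [Complex.star_def, _root_.map_mul, Complex.conj_ofReal]
      calc ((f j / c : ℝ) : ℂ) * (starRingEnd ℂ) (Complex.exp (((r j : ℝ) : ℂ) * Complex.I))
            * ((1 / (Real.sqrt n : ℂ)) * Complex.exp (((r j : ℝ) : ℂ) * Complex.I))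
          = ((f j / c : ℝ) : ℂ) * (1 / (Real.sqrt n : ℂ))
            * ((starRingEnd ℂ) (Complex.exp (((r j : ℝ) : ℂ) * Complex.I))
              * Complex.exp (((r j : ℝ) : ℂ) * Complex.I)) := by ring
        _ = ((f j / c : ℝ) : ℂ) * (1 / (Real.sqrt n : ℂ)) := by rw [hEconj j, mul_one]
        _ = (((f j / (c * Real.sqrt n)) : ℝ) : ℂ) := by push_cast; ring
    rw [dotProduct]
    rw [Finset.sum_congr rfl fun j _ => hterm j]
    rw [← Complex.ofReal_sum]
    congr 1
    rw [← Finset.sum_div, hsumf]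
  have hdenabs : ‖star y ⬝ᵥ u‖ = 1 / (c * Real.sqrt n) := by
    rw [hden, Complex.norm_real, Real.norm_eq_abs, _root_.abs_of_nonneg (by positivity)]
  -- the numerator
  have hnum : ‖star y ⬝ᵥ ((R.map Complex.ofReal) *ᵥ u)‖
      ≤ S * (1 / (c * Real.sqrt n)) := by
    have expand : star y ⬝ᵥ ((R.map Complex.ofReal) *ᵥ u)
        = ∑ i, (starRingEnd ℂ) (y i) * ∑ j, ((R i j : ℝ) : ℂ) * u j := by
      rw [dotProduct]
      refine Finset.sum_congr rfl fun i _ => ?_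
      rw [Pi.star_apply, Complex.star_def, Matrix.mulVec, dotProduct]
      rfl
    rw [expand]
    have habsy : ∀ i, ‖(starRingEnd ℂ) (y i)‖ = f i / c := by
      intro i
      rw [Complex.norm_conj, hy i, hexp i, norm_mul, Complex.norm_real, Real.norm_eq_abs, hEabs, mul_one,
        _root_.abs_of_nonneg (div_nonneg (hfnonneg i) hc.le)]
    have habsu : ∀ j, ‖u j‖ = 1 / Real.sqrt n := by
      intro j
      rw [hu j, hexp j, norm_mul, hEabs, mul_one, norm_div, norm_one, Complex.norm_real, Real.norm_eq_abs,
        _root_.abs_of_nonneg (Real.sqrt_nonneg _)]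
    calc ‖∑ i, (starRingEnd ℂ) (y i) * ∑ j, ((R i j : ℝ) : ℂ) * u j‖
        ≤ ∑ i, ‖(starRingEnd ℂ) (y i) * ∑ j, ((R i j : ℝ) : ℂ) * u j‖ :=
          norm_sum_le _ _
      _ ≤ ∑ i, (f i / c) * ∑ j, |R i j| * (1 / Real.sqrt n) := by
          apply Finset.sum_le_sum
          intro i _
          rw [norm_mul, habsy i]
          apply mul_le_mul_of_nonneg_left _ (div_nonneg (hfnonneg i) hc.le)
          calc ‖∑ j, ((R i j : ℝ) : ℂ) * u j‖
              ≤ ∑ j, ‖((R i j : ℝ) : ℂ) * u j‖ := norm_sum_le _ _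
            _ = ∑ j, |R i j| * (1 / Real.sqrt n) := by
                refine Finset.sum_congr rfl fun j _ => ?_
                rw [norm_mul, Complex.norm_real, Real.norm_eq_abs, habsu j]
      _ = S * (1 / (c * Real.sqrt n)) := by
          rw [hSdef, Fintype.sum_prod_type, Finset.sum_mul]
          refine Finset.sum_congr rfl fun i _ => ?_
          rw [Finset.mul_sum, Finset.sum_mul]
          refine Finset.sum_congr rfl fun j _ => ?_
          field_simp
  -- put everything together
  rw [hdenabs, div_le_iff₀ (by positivity)]
  calc ‖star y ⬝ᵥ ((R.map Complex.ofReal) *ᵥ u)‖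
      ≤ S * (1 / (c * Real.sqrt n)) := hnum
    _ ≤ Real.sqrt (2 * σ * ρ * F * n) * (1 / (c * Real.sqrt n)) :=
        mul_le_mul_of_nonneg_right hSle (by positivity)
    _ = Real.sqrt (2 * n) * Real.sqrt F * Real.sqrt σ * Real.sqrt ρ
        * (1 / (c * Real.sqrt n)) := by
        congr 1
        rw [show 2 * σ * ρ * F * (n:ℝ) = ((2 * (n:ℝ)) * F) * (σ * ρ) by ring,
          Real.sqrt_mul (by positivity), Real.sqrt_mul (by positivity),
          Real.sqrt_mul hσ0]
        ring
end
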